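/- Let m be a metric on the edges of G*π that respects the input weights w, is customized, and satisfies m(x,y) ≤ m(x,z) + m(z,y) for every edge {x,y} of G*π and every intermediate or upper triangle {x,y,z} of it (where m(u,v) denotes the weight of the edge {u,v} of G*π). Then for every edge {x,y} of G*π, m(x,y) equals the shortest xy-path distance in G under w; that is, m is the perfect metric m_P. -/

import Mathlib

open SimpleGraph
open scoped ENNReal

variable {V : Type*}

/-- One step of vertex contraction: remove `v` from the current graph and add an edge
between every pair of its current neighbors. -/
def chStep (H : SimpleGraph V) (v : V) : SimpleGraph V where
  Adj a b := a ≠ b ∧ a ≠ v ∧ b ≠ v ∧ (H.Adj a b ∨ (H.Adj v a ∧ H.Adj v b))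
  symm := by
    constructor
    rintro a b ⟨h1, h2, h3, h4⟩
    refine ⟨h1.symm, h3, h2, ?_⟩
    rcases h4 with h | ⟨ha, hb⟩
    · exact Or.inl h.symm
    · exact Or.inr ⟨hb, ha⟩
  loopless := ⟨fun a h => h.1 rfl⟩

lemma chStep_adj {H : SimpleGraph V} {v a b : V} :
    (chStep H v).Adj a b ↔ a ≠ b ∧ a ≠ v ∧ b ≠ v ∧ (H.Adj a b ∨ (H.Adj v a ∧ H.Adj v b)) :=
  Iff.rfl

/-- All edges ever present while contracting the vertices of the list in order:
the edges of the initial graph together with all added shortcuts. -/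
def chList : SimpleGraph V → List V → SimpleGraph V
  | H, [] => H
  | H, v :: l => H ⊔ chList (chStep H v) l

/-- The rank of a vertex with respect to the contraction order `π`. -/
def rk {n : ℕ} (π : Fin n ≃ V) (v : V) : ℕ := (π.symm v : ℕ)

/-- The contraction hierarchy `G*π`: contract `π 0, π 1, …` in this order and collect
all original edges and all added shortcuts. -/
def chGraph {n : ℕ} (G : SimpleGraph V) (π : Fin n ≃ V) : SimpleGraph V :=
  chList G ((List.finRange n).map ⇑π)

/-- A list of vertices is up-down w.r.t. a rank function: ranks strictly increase
along a prefix and strictly decrease along the remaining suffix, the two parts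
meeting at the maximum-rank vertex. -/
def IsUpDown (r : V → ℕ) (l : List V) : Prop :=
  ∃ l₁ x l₂, l = l₁ ++ x :: l₂ ∧
    List.Chain' (fun a b => r a < r b) (l₁ ++ [x]) ∧
    List.Chain' (fun a b => r b < r a) (x :: l₂)

/-- Reachability in the upward directed graph `G^∧π` (edges of `G*π` directed from
lower to higher rank): the vertex set of the search space `SS v`. -/
def UpReach {n : ℕ} (G : SimpleGraph V) (π : Fin n ≃ V) (v u : V) : Prop :=
  Relation.ReflTransGen (fun a b => (chGraph G π).Adj a b ∧ rk π a < rk π b) v u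

/-- Length of a walk: the sum of the weights of its edges. -/
noncomputable def wlen {H : SimpleGraph V} (m : V → V → ℝ≥0∞) {s t : V}
    (p : H.Walk s t) : ℝ≥0∞ :=
  (p.darts.map (fun d => m d.toProd.1 d.toProd.2)).sum

/-- Shortest path distance in a graph `H` under edge weights `m`. -/
noncomputable def gdist (H : SimpleGraph V) (m : V → V → ℝ≥0∞) (s t : V) : ℝ≥0∞ :=
  ⨅ (p : H.Walk s t), wlen m p

/-- Minimum length of an up-down `s`-`t` path in `G*π`. -/
noncomputable def updist {n : ℕ} (G : SimpleGraph V) (π : Fin n ≃ V)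
    (m : V → V → ℝ≥0∞) (s t : V) : ℝ≥0∞ :=
  ⨅ (p : (chGraph G π).Walk s t) (_ : IsUpDown (rk π) p.support), wlen m p

/-- Minimum length of a strictly rank-increasing `u`-`v` path in `G*π`. -/
noncomputable def upOnlyDist {n : ℕ} (G : SimpleGraph V) (π : Fin n ≃ V)
    (m : V → V → ℝ≥0∞) (u v : V) : ℝ≥0∞ :=
  ⨅ (p : (chGraph G π).Walk u v)
    (_ : List.Chain' (fun a b => rk π a < rk π b) p.support), wlen m p

/-- `S` is a balanced separator of the subgraph of `G` induced by `U`. -/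
def IsBalancedSepOn [DecidableEq V] (G : SimpleGraph V) (U S : Finset V) : Prop :=
  S ⊆ U ∧ ∃ A B : Finset V, A ⊆ U ∧ B ⊆ U ∧
    Disjoint A B ∧ Disjoint A S ∧ Disjoint B S ∧ A ∪ B ∪ S = U ∧
    (∀ a ∈ A, ∀ b ∈ B, ¬ G.Adj a b) ∧
    3 * A.card ≤ 2 * U.card ∧ 3 * B.card ≤ 2 * U.card

/-- Nested dissection orders (as lists, earliest contracted first, separator last)
of induced subgraphs of `G`, in which the separator chosen at every recursion step on
a `k`-vertex subgraph is balanced and has cardinality at most `c * k ^ α`. -/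
inductive IsNDOrder [DecidableEq V] (G : SimpleGraph V) (c α : ℝ) : Finset V → List V → Prop
  | empty : IsNDOrder G c α ∅ []
  | step {U S A B : Finset V} {lA lB lS : List V} :
      Disjoint A B → Disjoint A S → Disjoint B S → A ∪ B ∪ S = U →
      (∀ a ∈ A, ∀ b ∈ B, ¬ G.Adj a b) →
      3 * A.card ≤ 2 * U.card → 3 * B.card ≤ 2 * U.card →
      ((S.card : ℝ) ≤ c * (U.card : ℝ) ^ α) →
      lS.Nodup → lS.toFinset = S →
      IsNDOrder G c α A lA → IsNDOrder G c α B lB →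
      IsNDOrder G c α U (lA ++ lB ++ lS)

/-- Number of vertices of the search space `SS v` in `G^∧π`. -/
noncomputable def nVertsSS {n : ℕ} (G : SimpleGraph V) (π : Fin n ≃ V) (v : V) : ℕ :=
  {u | UpReach G π v u}.ncard

/-- Number of arcs of the search space `SS v` in `G^∧π`: arcs of `G^∧π` with both
endpoints reachable from `v`. -/
noncomputable def nArcsSS {n : ℕ} (G : SimpleGraph V) (π : Fin n ≃ V) (v : V) : ℕ :=
  {q : V × V | (chGraph G π).Adj q.1 q.2 ∧ rk π q.1 < rk π q.2 ∧
    UpReach G π v q.1 ∧ UpReach G π v q.2}.ncard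

/-- The rank sequence of a walk: for each edge, the minimum of the ranks of its
endpoints, sorted in decreasing order. -/
def rankSeq {H : SimpleGraph V} (r : V → ℕ) {s t : V} (p : H.Walk s t) : List ℕ :=
  (p.darts.map (fun d => min (r d.toProd.1) (r d.toProd.2))).insertionSort (· ≥ ·)

/-- Directed length of a walk in `G*π` under a pair of directed metrics `(mu, md)`:
each edge traversed from lower rank to higher rank costs its upward weight,
each edge traversed from higher rank to lower rank costs its downward weight. -/
noncomputable def dlen {H : SimpleGraph V} (r : V → ℕ) (mu md : V → V → ℝ≥0∞)
    {s t : V} (p : H.Walk s t) : ℝ≥0∞ :=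
  (p.darts.map (fun d =>
    if r d.toProd.1 < r d.toProd.2 then mu d.toProd.1 d.toProd.2
    else md d.toProd.2 d.toProd.1)).sum

/-- Length of a directed walk `s :: l` under arc weights `wD`. -/
noncomputable def dWalkLen (wD : V → V → ℝ≥0∞) : V → List V → ℝ≥0∞
  | _, [] => 0
  | s, x :: l => wD s x + dWalkLen wD x l

/-- Shortest directed path distance in the directed graph `D` under arc weights `wD`. -/
noncomputable def ddist (D : V → V → Prop) (wD : V → V → ℝ≥0∞) (s t : V) : ℝ≥0∞ :=
  ⨅ (l : List V) (_ : List.Chain D s l ∧ l.getLastD s = t), dWalkLen wD s l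

/-! ### Auxiliary lemmas for `stmt8` -/

lemma chList_mono : ∀ (l : List V) (H : SimpleGraph V), H ≤ chList H l
  | [], H => le_refl _
  | v :: l, H => le_sup_left

lemma chList_isolated : ∀ (l : List V) (H : SimpleGraph V) (v : V),
    (∀ u, ¬ H.Adj v u) → ∀ u, ¬ (chList H l).Adj v u
  | [], H, v, hv, u => hv u
  | x :: l, H, v, hv, u => by
    intro h
    rcases h with h | h
    · exact hv u h
    · refine chList_isolated l (chStep H x) v ?_ u h
      intro z hz
      obtain ⟨h1, h2, h3, h4 | ⟨h5, h6⟩⟩ := chStep_adj.mp hz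
      · exact hv z h4
      · exact hv x h5.symm

lemma chStep_isolated (H : SimpleGraph V) (v u : V) : ¬ (chStep H v).Adj v u := by
  intro h; obtain ⟨h1, h2, h3, h4⟩ := chStep_adj.mp h; exact h2 rfl

/-- Lower-triangle closure of the contraction process: if `x` occurs in the
contraction list before `a` and `b` (which are not in the list-prefix) and is
adjacent to both, then `a` and `b` are adjacent. -/
lemma chList_closure : ∀ (l : List V), l.Nodup → ∀ (H : SimpleGraph V) (x a b : V)
    (l₁ l₂ : List V), l = l₁ ++ x :: l₂ → a ∉ l₁ → a ≠ x → b ∉ l₁ → b ≠ x → a ≠ b →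
    (chList H l).Adj x a → (chList H l).Adj x b → (chList H l).Adj a b
  | [], _, H, x, a, b, l₁, l₂, heq, _, _, _, _, _, _, _ => by
    exact absurd heq (by simp)
  | v :: l, hnd, H, x, a, b, l₁, l₂, heq, ha1, hax, hb1, hbx, hab, hxa, hxb => by
    cases l₁ with
    | nil =>
      -- x = v is the first contracted vertex
      simp only [List.nil_append, List.cons.injEq] at heq
      obtain ⟨rfl, rfl⟩ := heq
      have hiso := chList_isolated l (chStep H v) v (chStep_isolated H v)
      have hHa : H.Adj v a := by
        rcases hxa with h | h
        · exact h
        · exact absurd h (hiso a)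
      have hHb : H.Adj v b := by
        rcases hxb with h | h
        · exact h
        · exact absurd h (hiso b)
      have : (chStep H v).Adj a b := chStep_adj.mpr ⟨hab, hax, hbx, Or.inr ⟨hHa, hHb⟩⟩
      exact Or.inr (chList_mono l (chStep H v) this)
    | cons c l₁' =>
      simp only [List.cons_append, List.cons.injEq] at heq
      obtain ⟨rfl, rfl⟩ := heq
      have hnd' : (l₁' ++ x :: l₂).Nodup := hnd.of_cons
      have hvnotin : v ∉ l₁' ++ x :: l₂ := by
        have := hnd; rw [List.nodup_cons] at this; exact this.1
      have hxv : x ≠ v := by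
        rintro rfl; exact hvnotin (by simp)
      have hav : a ≠ v := by
        rintro rfl; exact ha1 (by simp)
      have hbv : b ≠ v := by
        rintro rfl; exact hb1 (by simp)
      have ha1' : a ∉ l₁' := fun h => ha1 (by simp [h])
      have hb1' : b ∉ l₁' := fun h => hb1 (by simp [h])
      set H' := chStep H v with hH'
      have step : ∀ y z : V, y ≠ v → z ≠ v →
          (chList H (v :: (l₁' ++ x :: l₂))).Adj y z →
          (chList H' (l₁' ++ x :: l₂)).Adj y z := by
        intro y z hy hz h
        rcases h with h | h
        · exact chList_mono _ H' ((chStep_adj (H := H) (v := v)).mpr ⟨h.ne, hy, hz, Or.inl h⟩)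
        · exact h
      have hxa' := step x a hxv hav hxa
      have hxb' := step x b hxv hbv hxb
      have := chList_closure (l₁' ++ x :: l₂) hnd' H' x a b l₁' l₂ rfl
        ha1' hax hb1' hbx hab hxa' hxb'
      exact Or.inr this

lemma rk_injective {n : ℕ} (π : Fin n ≃ V) {a b : V} (h : rk π a = rk π b) : a = b := by
  have : π.symm a = π.symm b := Fin.ext h
  exact π.symm.injective this

/-- Lower-triangle closure for the contraction hierarchy. -/
lemma chGraph_closure {n : ℕ} (G : SimpleGraph V) (π : Fin n ≃ V) {x a b : V}
    (hxa : (chGraph G π).Adj x a) (hxb : (chGraph G π).Adj x b) (hab : a ≠ b)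
    (hra : rk π x < rk π a) (hrb : rk π x < rk π b) : (chGraph G π).Adj a b := by
  classical
  set L : List V := (List.finRange n).map ⇑π with hL
  have hlen : L.length = n := by simp [hL]
  have hi : rk π x < n := (π.symm x).isLt
  have hgetL : ∀ (j : ℕ) (hj : j < L.length), L[j] = π ⟨j, by omega⟩ := by
    intro j hj; simp [hL]
  have hgetx : L[rk π x]'(by omega) = x := by
    rw [hgetL (rk π x) (by omega)]
    show π ⟨(π.symm x : ℕ), _⟩ = x
    exact π.apply_symm_apply x
  have heq : L = L.take (rk π x) ++ x :: L.drop (rk π x + 1) := by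
    conv_lhs => rw [← List.take_append_drop (rk π x) L]
    congr 1
    rw [← List.getElem_cons_drop (as := L) (i := rk π x) (by omega), hgetx]
  have hmemtake : ∀ y : V, rk π x < rk π y → y ∉ L.take (rk π x) := by
    intro y hy hmem
    rw [List.mem_take_iff_getElem] at hmem
    obtain ⟨j, hj, hjy⟩ := hmem
    have hj' : j < n := by omega
    rw [hgetL j (by omega)] at hjy
    have : rk π y = j := by
      unfold rk; rw [← hjy, Equiv.symm_apply_apply]
    omega
  have hnd : L.Nodup := (List.nodup_finRange n).map π.injective
  have hax : a ≠ x := fun h => by subst h; omega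
  have hbx : b ≠ x := fun h => by subst h; omega
  exact chList_closure L hnd G x a b (L.take (rk π x)) (L.drop (rk π x + 1)) heq
    (hmemtake a hra) hax (hmemtake b hrb) hbx hab hxa hxb

lemma wlen_cons {H : SimpleGraph V} (m : V → V → ℝ≥0∞) {a c t : V}
    (h : H.Adj a c) (q : H.Walk c t) :
    wlen m (SimpleGraph.Walk.cons h q) = m a c + wlen m q := by
  simp [wlen]

lemma wlen_reverse {H : SimpleGraph V} (m : V → V → ℝ≥0∞)
    (hm : ∀ a b, m a b = m b a) {s t : V} (p : H.Walk s t) :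
    wlen m p.reverse = wlen m p := by
  unfold wlen
  rw [SimpleGraph.Walk.darts_reverse, List.map_reverse, List.sum_reverse, List.map_map]
  congr 1
  apply List.map_congr_left
  intro d _
  exact hm d.toProd.2 d.toProd.1

lemma isUpDown_reverse (r : V → ℕ) (l : List V) (h : IsUpDown r l) :
    IsUpDown r l.reverse := by
  obtain ⟨l₁, x, l₂, rfl, h1, h2⟩ := h
  refine ⟨l₂.reverse, x, l₁.reverse, by simp, ?_, ?_⟩
  · have : (x :: l₂).reverse = l₂.reverse ++ [x] := by simp
    rw [← this]
    exact List.isChain_reverse.mpr h2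
  · have : (l₁ ++ [x]).reverse = x :: l₁.reverse := by simp
    rw [← this]
    exact List.isChain_reverse.mpr h1

lemma chain'_lt_of_mem (r : V → ℕ) : ∀ (t : List V) (c : V),
    List.Chain' (fun a b => r b < r a) (c :: t) → ∀ e ∈ t, r e < r c
  | [], c, _, e, he => absurd he (by simp)
  | d :: t', c, h, e, he => by
    replace h := List.isChain_cons_cons.mp h
    rcases List.mem_cons.mp he with rfl | he'
    · exact h.1
    · exact lt_trans (chain'_lt_of_mem r t' d h.2 e he') h.1

lemma isUpDown_head (r : V → ℕ) (a v1 b : V) (rest : List V)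
    (h : IsUpDown r (a :: v1 :: rest)) (hb : b ∈ v1 :: rest) (hab : r a < r b) :
    r a < r v1 := by
  obtain ⟨l₁, z, l₂, heq, h1, h2⟩ := h
  cases l₁ with
  | nil =>
    simp only [List.nil_append, List.cons.injEq] at heq
    obtain ⟨rfl, heq2⟩ := heq
    rw [← heq2] at h2
    exact absurd (chain'_lt_of_mem r (v1 :: rest) a h2 b hb) (by omega)
  | cons c l₁' =>
    simp only [List.cons_append, List.cons.injEq] at heq
    obtain ⟨rfl, heq2⟩ := heq
    cases l₁' with
    | nil =>
      simp only [List.nil_append, List.cons.injEq] at heq2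
      obtain ⟨rfl, _⟩ := heq2
      rw [List.singleton_append] at h1
      replace h1 := List.isChain_cons_cons.mp h1
      exact h1.1
    | cons d l₁'' =>
      simp only [List.cons_append, List.cons.injEq] at heq2
      obtain ⟨rfl, _⟩ := heq2
      rw [List.cons_append, List.cons_append] at h1
      replace h1 := List.isChain_cons_cons.mp h1
      exact h1.1

lemma isUpDown_tail (r : V → ℕ) (a v1 : V) (rest : List V)
    (h : IsUpDown r (a :: v1 :: rest)) : IsUpDown r (v1 :: rest) := by
  obtain ⟨l₁, z, l₂, heq, h1, h2⟩ := h
  cases l₁ with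
  | nil =>
    simp only [List.nil_append, List.cons.injEq] at heq
    obtain ⟨rfl, heq2⟩ := heq
    rw [← heq2] at h2
    exact ⟨[], v1, rest, rfl, List.isChain_singleton _, h2.tail⟩
  | cons c l₁' =>
    simp only [List.cons_append, List.cons.injEq] at heq
    obtain ⟨rfl, heq2⟩ := heq
    refine ⟨l₁', z, l₂, heq2, ?_, h2⟩
    rw [List.cons_append] at h1
    exact h1.tail

/-- Main induction: any up-down path between the endpoints of an edge of `G*π`
is at least as long as the edge. -/
lemma main_aux {n : ℕ} (G : SimpleGraph V) (π : Fin n ≃ V) (m : V → V → ℝ≥0∞)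
    (hm_symm : ∀ a b, m a b = m b a)
    (hiu : ∀ x y z, (chGraph G π).Adj x y → (chGraph G π).Adj x z →
      (chGraph G π).Adj z y → rk π x < rk π y → rk π x < rk π z →
      m x y ≤ m x z + m z y) :
    ∀ (k : ℕ) (a b : V), (chGraph G π).Adj a b →
      ∀ p : (chGraph G π).Walk a b, p.length = k → IsUpDown (rk π) p.support →
      m a b ≤ wlen m p := by
  intro k
  induction k using Nat.strong_induction_on with
  | _ k ih =>
    -- asymmetric core argument, assuming rk a < rk b
    have asym : ∀ (a b : V), (chGraph G π).Adj a b → rk π a < rk π b →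
        ∀ p : (chGraph G π).Walk a b, p.length = k → IsUpDown (rk π) p.support →
        m a b ≤ wlen m p := by
      intro a b hab hrab p hplen hud
      cases p with
      | nil => exact absurd rfl hab.ne
      | @cons _ v1 _ h q =>
        rw [wlen_cons]
        by_cases hv1b : v1 = b
        · subst hv1b
          exact le_self_add
        · -- support shape
          have hq : q.support = v1 :: q.support.tail := q.support_eq_cons
          rw [SimpleGraph.Walk.support_cons] at hud
          have hud' : IsUpDown (rk π) (a :: v1 :: q.support.tail) := by
            rw [← hq]; exact hud
          have hbmem : b ∈ v1 :: q.support.tail := by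
            rw [← hq]; exact q.end_mem_support
          have hrav1 : rk π a < rk π v1 :=
            isUpDown_head (rk π) a v1 b q.support.tail hud' hbmem hrab
          have hv1badj : (chGraph G π).Adj v1 b :=
            chGraph_closure G π h hab hv1b hrav1 hrab
          have hudq : IsUpDown (rk π) q.support := by
            rw [hq]
            exact isUpDown_tail (rk π) a v1 q.support.tail hud'
          have hqlen : q.length < k := by
            rw [← hplen, SimpleGraph.Walk.length_cons]; omega
          have hIH := ih q.length hqlen v1 b hv1badj q rfl hudq
          calc m a b ≤ m a v1 + m v1 b := hiu a b v1 hab h hv1badj hrab hrav1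
            _ ≤ m a v1 + wlen m q := by exact add_le_add_right hIH _
    intro a b hab p hplen hud
    rcases lt_trichotomy (rk π a) (rk π b) with hr | hr | hr
    · exact asym a b hab hr p hplen hud
    · exact absurd (rk_injective π hr) hab.ne
    · have hrev := asym b a hab.symm hr p.reverse
        (by rw [SimpleGraph.Walk.length_reverse]; exact hplen)
        (by rw [SimpleGraph.Walk.support_reverse]; exact isUpDown_reverse _ _ hud)
      rw [wlen_reverse m hm_symm] at hrev
      rw [hm_symm]
      exact hrev

/-- A metric `m` that respects `w`, is customized, and satisfies the
triangle inequality for all intermediate and upper triangles, is the perfect metric: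
for every edge `{x, y}` of `G*π`, `m x y` is the shortest `x`-`y` distance in `G`. -/
theorem stmt8 {V : Type*} {n : ℕ} (G : SimpleGraph V) (hG : G.Connected)
    (π : Fin n ≃ V) (w m : V → V → ℝ≥0∞)
    (hw_symm : ∀ a b, w a b = w b a)
    (hw_pos : ∀ a b, G.Adj a b → 0 < w a b ∧ w a b < ⊤)
    (hm_symm : ∀ a b, m a b = m b a)
    (hm_pos : ∀ a b, (chGraph G π).Adj a b → 0 < m a b)
    (hresp : ∀ s t, gdist (chGraph G π) m s t = gdist G w s t)
    (hcust : ∀ s t, updist G π m s t = gdist (chGraph G π) m s t)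
    (hiu : ∀ x y z, (chGraph G π).Adj x y → (chGraph G π).Adj x z →
      (chGraph G π).Adj z y → rk π x < rk π y → rk π x < rk π z →
      m x y ≤ m x z + m z y) :
    ∀ x y, (chGraph G π).Adj x y → m x y = gdist G w x y := by
  intro x y hxy
  have h1 : gdist G w x y ≤ m x y := by
    rw [← hresp]
    refine iInf_le_of_le hxy.toWalk (le_of_eq ?_)
    simp [wlen, SimpleGraph.Adj.toWalk]
  have h2 : m x y ≤ gdist G w x y := by
    rw [← hresp, ← hcust]
    refine le_iInf fun p => le_iInf fun hud => ?_
    exact main_aux G π m hm_symm hiu p.length x y hxy p rfl hud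
  exact le_antisymm h2 h1
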